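/- Support splitting theorem for stable semantics: Let (F₁,F₂,S₃) be a support splitting of BSAF F and F₂^{E₁} the S-reduct. (1) If E₁ ∈ stb(F₁) and E₂ ∈ stb(F₂^{E₁}), then E₁ ∪ (E₂ \ {*₂}) ∈ stb(F). (2) If E ∈ stb(F), then E ∩ A₁ ∈ stb(F₁) and either E ∩ A₂ ∈ stb(F₂^{E₁}) or (E ∩ A₂) ∪ {*₂} ∈ stb(F₂^{E₁}). -/
import Mathlib


variable {α : Type*}

/-- A bipolar set-argumentation framework: arguments `A`, collective attacks `R`,
collective supports `S`. -/
structure BSAF (α : Type*) where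
  A : Set α
  R : Set (Set α × α)
  S : Set (Set α × α)

namespace BSAF

/-- Membership in the least superset of `E` that is closed under the supports of `F`. -/
inductive InCl (F : BSAF α) (E : Set α) : α → Prop
  | base {a : α} : a ∈ E → InCl F E a
  | step {T : Set α} {h : α} : (T, h) ∈ F.S → (∀ t ∈ T, InCl F E t) → InCl F E h

/-- The closure of `E` under the supports of `F`. -/
def cl (F : BSAF α) (E : Set α) : Set α := {a | F.InCl E a}

/-- `E` is closed if its closure equals itself. -/
def Closed (F : BSAF α) (E : Set α) : Prop := F.cl E = E

/-- `E` attacks the set `D`. -/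
def Attacks (F : BSAF α) (E D : Set α) : Prop :=
  ∃ T h, (T, h) ∈ F.R ∧ T ⊆ E ∧ h ∈ D

/-- `E` is conflict-free: it does not attack itself. -/
def ConflictFree (F : BSAF α) (E : Set α) : Prop :=
  ¬ ∃ T h, (T, h) ∈ F.R ∧ T ⊆ E ∧ h ∈ E

/-- `E` defends `a`: every closed attacker of `a` is attacked by `E`. -/
def Defends (F : BSAF α) (E : Set α) (a : α) : Prop :=
  ∀ D : Set α, D ⊆ F.A → F.Closed D → (∃ T, (T, a) ∈ F.R ∧ T ⊆ D) → F.Attacks E D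

/-- `E` is admissible: conflict-free, closed, and defends each of its members. -/
def Admissible (F : BSAF α) (E : Set α) : Prop :=
  E ⊆ F.A ∧ F.ConflictFree E ∧ F.Closed E ∧ ∀ a ∈ E, F.Defends E a

/-- `E` is complete: admissible and contains every argument it defends. -/
def Complete (F : BSAF α) (E : Set α) : Prop :=
  F.Admissible E ∧ ∀ a ∈ F.A, F.Defends E a → a ∈ E

/-- Grounded: ⊆-minimal complete. -/
def Grounded (F : BSAF α) (E : Set α) : Prop :=
  F.Complete E ∧ ∀ E', F.Complete E' → E' ⊆ E → E' = E

/-- Preferred: ⊆-maximal admissible. -/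
def Preferred (F : BSAF α) (E : Set α) : Prop :=
  F.Admissible E ∧ ∀ E', F.Admissible E' → E ⊆ E' → E' = E

/-- Stable: admissible and attacks every outside argument. -/
def Stable (F : BSAF α) (E : Set α) : Prop :=
  F.Admissible E ∧ ∀ x ∈ F.A \ E, ∃ T, (T, x) ∈ F.R ∧ T ⊆ E

end BSAF
namespace BSAF

/-- All links of `G` stay within its argument set. -/
def WithinA (G : BSAF α) : Prop :=
  (∀ p ∈ G.R, p.1 ⊆ G.A ∧ p.2 ∈ G.A) ∧ (∀ p ∈ G.S, p.1 ⊆ G.A ∧ p.2 ∈ G.A)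

/-- `(F₁, F₂, R₃)` is an attack splitting of `F`. -/
def IsAttackSplitting (F F₁ F₂ : BSAF α) (R₃ : Set (Set α × α)) : Prop :=
  F₁.WithinA ∧ F₂.WithinA ∧
  F₁.A ∩ F₂.A = ∅ ∧ F.A = F₁.A ∪ F₂.A ∧
  F.S = F₁.S ∪ F₂.S ∧
  F.R = F₁.R ∪ F₂.R ∪ R₃ ∧
  ∀ p ∈ R₃, (p.1 ∩ F₁.A).Nonempty ∧ p.1 ⊆ F.A ∧ p.2 ∈ F₂.A

/-- The closed negative links `R₃ᶜ = {(cl(T), h) | (T, h) ∈ R₃}`. -/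
def closedLinks (F : BSAF α) (R₃ : Set (Set α × α)) : Set (Set α × α) :=
  {p | ∃ T h, (T, h) ∈ R₃ ∧ p = (F.cl T, h)}

/-- The arguments attacked by `E` via the attack relation `Rs`. -/
def attackedBy (Rs : Set (Set α × α)) (E : Set α) : Set α :=
  {a | ∃ T, (T, a) ∈ Rs ∧ T ⊆ E}

/-- The `(E₁, R₃ᶜ)`-reduct of `F₂`. -/
def Rreduct (F F₁ F₂ : BSAF α) (R₃ : Set (Set α × α)) (E₁ : Set α) : BSAF α where
  A := F₂.A
  R := F₂.R ∪ {p | ∃ T h, (T, h) ∈ F.closedLinks R₃ ∧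
        T ∩ attackedBy (F₁.R ∪ F.closedLinks R₃) E₁ = ∅ ∧
        T ∩ F₁.A ⊆ E₁ ∧ p = (T ∩ F₂.A, h)}
  S := F₂.S

/-- The undecided links in `R₃ᶜ` w.r.t. `E₁`. -/
def undecidedLinks (F F₁ : BSAF α) (R₃ : Set (Set α × α)) (E₁ : Set α) : Set (Set α × α) :=
  {p | p ∈ F.closedLinks R₃ ∧
    p.1 ∩ attackedBy (F₁.R ∪ F.closedLinks R₃) E₁ = ∅ ∧ ¬ p.1 ∩ F₁.A ⊆ E₁}

/-- The modification `F₂* = mod^{E₁}_{R₃ᶜ}(F₂^{E₁})`, with fresh self-attacker `s₀`. -/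
def modification (F F₁ F₂ : BSAF α) (R₃ : Set (Set α × α)) (E₁ : Set α) (s₀ : α) : BSAF α where
  A := F₂.A ∪ {s₀}
  R := (F.Rreduct F₁ F₂ R₃ E₁).R ∪ {({s₀}, s₀)} ∪
       {p | ∃ T h, (T, h) ∈ F.undecidedLinks F₁ R₃ E₁ ∧ p = ((T ∩ F₂.A) ∪ {s₀}, h)}
  S := F₂.S

end BSAF
namespace BSAF

/-- `(F₁, F₂, S₃)` is a support splitting of `F`. -/
def IsSupportSplitting (F F₁ F₂ : BSAF α) (S₃ : Set (Set α × α)) : Prop :=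
  F₁.WithinA ∧ F₂.WithinA ∧
  F₁.A ∩ F₂.A = ∅ ∧ F.A = F₁.A ∪ F₂.A ∧
  F.R = F₁.R ∪ F₂.R ∧
  F.S = F₁.S ∪ F₂.S ∪ S₃ ∧
  ∀ p ∈ S₃, (p.1 ∩ F₂.A).Nonempty ∧ p.1 ⊆ F.A ∧ p.2 ∈ F₁.A

/-- Support-incompatible sets `𝒯_{S₃}(E₁)`. -/
def suppIncompatible (F₁ : BSAF α) (S₃ : Set (Set α × α)) (E₁ : Set α) : Set (Set α) :=
  {T | ∃ h ∈ F₁.A, (T, h) ∈ S₃ ∧ T ∩ F₁.A ⊆ E₁ ∧ h ∉ E₁}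

/-- Closure-defeated sets `𝒟_{S₃}(E₁)`. -/
def closureDefeated (F F₁ : BSAF α) (S₃ : Set (Set α × α)) (E₁ : Set α) : Set (Set α) :=
  {T | T ∈ suppIncompatible F₁ S₃ E₁ ∧ T ∩ F₁.A = ∅ ∧
    (F.cl T ∩ attackedBy F.R E₁).Nonempty}

/-- Componentwise union of two BSAFs. -/
def bunion (G H : BSAF α) : BSAF α := ⟨G.A ∪ H.A, G.R ∪ H.R, G.S ∪ H.S⟩

open Classical in
/-- Type-1-modification of `F₂` with fresh argument `s₁`. -/
noncomputable def type1Mod (F F₁ F₂ : BSAF α) (S₃ : Set (Set α × α)) (E₁ : Set α)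
    (s₁ : α) : BSAF α :=
  if F.closureDefeated F₁ S₃ E₁ = ∅ then F₂ else
    ⟨F₂.A ∪ {s₁}, F₂.R ∪ {((∅ : Set α), s₁)},
      F₂.S ∪ {p | ∃ T ∈ F.closureDefeated F₁ S₃ E₁, p = (T ∩ F₂.A, s₁)}⟩

open Classical in
/-- Type-2-modification of `F₂` with fresh argument `s₂`. -/
noncomputable def type2Mod (F F₁ F₂ : BSAF α) (S₃ : Set (Set α × α)) (E₁ : Set α)
    (s₂ : α) : BSAF α :=
  if suppIncompatible F₁ S₃ E₁ \ F.closureDefeated F₁ S₃ E₁ = ∅ then F₂ else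
    ⟨F₂.A ∪ {s₂},
      F₂.R ∪ {p | ∃ T ∈ suppIncompatible F₁ S₃ E₁ \ F.closureDefeated F₁ S₃ E₁,
        p = ((T ∩ F₂.A) ∪ {s₂}, s₂)},
      F₂.S ∪ {p | ∃ T ∈ suppIncompatible F₁ S₃ E₁ \ F.closureDefeated F₁ S₃ E₁,
        p = (T ∩ F₂.A, s₂)}⟩

/-- The `(E₁, S₃)`-reduct (S-reduct) of `F₂`: union of type-1 and type-2 modifications. -/
noncomputable def Sreduct (F F₁ F₂ : BSAF α) (S₃ : Set (Set α × α)) (E₁ : Set α)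
    (s₁ s₂ : α) : BSAF α :=
  bunion (F.type1Mod F₁ F₂ S₃ E₁ s₁) (F.type2Mod F₁ F₂ S₃ E₁ s₂)

end BSAF

namespace BSAF

lemma pair_inj' {T T' : Set α} {h h' : α} (he : (T, h) = (T', h')) : T = T' ∧ h = h' := by
  cases he; exact ⟨rfl, rfl⟩

lemma closed_iff' {F : BSAF α} {E : Set α} :
    F.Closed E ↔ ∀ a, F.InCl E a → a ∈ E := by
  constructor
  · intro h a ha
    have : a ∈ F.cl E := ha
    rw [h] at this; exact this
  · intro h
    apply Set.Subset.antisymm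
    · intro a ha; exact h a ha
    · intro a ha; exact InCl.base ha

lemma mem_of_closed_support {F : BSAF α} {E T : Set α} {h : α}
    (hc : F.Closed E) (hS : (T, h) ∈ F.S) (hT : T ⊆ E) : h ∈ E :=
  closed_iff'.1 hc h (InCl.step hS (fun t ht => InCl.base (hT ht)))

lemma stable_iff' {F : BSAF α} {E : Set α} :
    F.Stable E ↔ E ⊆ F.A ∧ F.ConflictFree E ∧ F.Closed E ∧
      ∀ x ∈ F.A \ E, ∃ T, (T, x) ∈ F.R ∧ T ⊆ E := by
  constructor
  · rintro ⟨⟨h1, h2, h3, _⟩, h5⟩; exact ⟨h1, h2, h3, h5⟩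
  · rintro ⟨h1, h2, h3, h4⟩
    refine ⟨⟨h1, h2, h3, ?_⟩, h4⟩
    rintro a ha D hDA hDcl ⟨T, hTR, hTD⟩
    by_cases hTE : T ⊆ E
    · exact absurd ⟨T, a, hTR, hTE, ha⟩ h2
    · obtain ⟨t, htT, htE⟩ := Set.not_subset.mp hTE
      obtain ⟨T', hT'R, hT'E⟩ := h4 t ⟨hDA (hTD htT), htE⟩
      exact ⟨T', t, hT'R, hT'E, hTD htT⟩

section SreductLemmas

variable (F F₁ F₂ : BSAF α) (S₃ : Set (Set α × α)) (E₁ : Set α) (s₁ s₂ : α)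

lemma mem_Sreduct_A_iff {a : α} :
    a ∈ (F.Sreduct F₁ F₂ S₃ E₁ s₁ s₂).A ↔ a ∈ F₂.A ∨
      (F.closureDefeated F₁ S₃ E₁ ≠ ∅ ∧ a = s₁) ∨
      (suppIncompatible F₁ S₃ E₁ \ F.closureDefeated F₁ S₃ E₁ ≠ ∅ ∧ a = s₂) := by
  simp only [Sreduct, bunion, type1Mod, type2Mod]
  split_ifs with h1 h2 h2 <;> simp_all <;> tauto

lemma mem_Sreduct_R_iff {p : Set α × α} :
    p ∈ (F.Sreduct F₁ F₂ S₃ E₁ s₁ s₂).R ↔ p ∈ F₂.R ∨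
      (F.closureDefeated F₁ S₃ E₁ ≠ ∅ ∧ p = (∅, s₁)) ∨
      (∃ T ∈ suppIncompatible F₁ S₃ E₁ \ F.closureDefeated F₁ S₃ E₁,
        p = ((T ∩ F₂.A) ∪ {s₂}, s₂)) := by
  simp only [Sreduct, bunion, type1Mod, type2Mod]
  split_ifs with h1 h2 h2 <;>
    simp_all [Set.eq_empty_iff_forall_notMem] <;> aesop

lemma mem_Sreduct_S_iff {p : Set α × α} :
    p ∈ (F.Sreduct F₁ F₂ S₃ E₁ s₁ s₂).S ↔ p ∈ F₂.S ∨
      (∃ T ∈ F.closureDefeated F₁ S₃ E₁, p = (T ∩ F₂.A, s₁)) ∨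
      (∃ T ∈ suppIncompatible F₁ S₃ E₁ \ F.closureDefeated F₁ S₃ E₁,
        p = (T ∩ F₂.A, s₂)) := by
  simp only [Sreduct, bunion, type1Mod, type2Mod]
  split_ifs with h1 h2 h2 <;>
    simp_all [Set.eq_empty_iff_forall_notMem] <;> aesop

end SreductLemmas

end BSAF

/-- Support splitting theorem for stable semantics. -/
theorem BSAF.supportSplitting_stable (F F₁ F₂ : BSAF α) (S₃ : Set (Set α × α))
    (hsplit : F.IsSupportSplitting F₁ F₂ S₃) (hfin : F.A.Finite)
    (s₁ s₂ : α) (hs₁ : s₁ ∉ F.A) (hs₂ : s₂ ∉ F.A) (hne : s₁ ≠ s₂) :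
    (∀ E₁ E₂ : Set α, F₁.Stable E₁ →
      (F.Sreduct F₁ F₂ S₃ E₁ s₁ s₂).Stable E₂ →
      F.Stable (E₁ ∪ (E₂ \ {s₂}))) ∧
    (∀ E : Set α, F.Stable E →
      F₁.Stable (E ∩ F₁.A) ∧
      ((F.Sreduct F₁ F₂ S₃ (E ∩ F₁.A) s₁ s₂).Stable (E ∩ F₂.A) ∨
        (F.Sreduct F₁ F₂ S₃ (E ∩ F₁.A) s₁ s₂).Stable ((E ∩ F₂.A) ∪ {s₂}))) := by
  obtain ⟨hW1, hW2, hdisj, hA, hR, hS, hS3⟩ := hsplit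
  have hdj : ∀ a, a ∈ F₁.A → a ∈ F₂.A → False := fun a h1 h2 =>
    Set.eq_empty_iff_forall_notMem.mp hdisj a ⟨h1, h2⟩
  have hs₁A1 : s₁ ∉ F₁.A := fun h => hs₁ (by rw [hA]; exact Or.inl h)
  have hs₁A2 : s₁ ∉ F₂.A := fun h => hs₁ (by rw [hA]; exact Or.inr h)
  have hs₂A1 : s₂ ∉ F₁.A := fun h => hs₂ (by rw [hA]; exact Or.inl h)
  have hs₂A2 : s₂ ∉ F₂.A := fun h => hs₂ (by rw [hA]; exact Or.inr h)
  constructor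
  · -- Direction 1
    intro E₁ E₂ hE₁ hE₂
    obtain ⟨hE₁A, hE₁cf, hE₁cl, hE₁att⟩ := stable_iff'.mp hE₁
    obtain ⟨hE₂A, hE₂cf, hE₂cl, hE₂att⟩ := stable_iff'.mp hE₂
    -- s₁ is never in E₂
    have hs₁E₂ : s₁ ∉ E₂ := by
      intro hmem
      rcases (mem_Sreduct_A_iff F F₁ F₂ S₃ E₁ s₁ s₂).mp (hE₂A hmem) with h | ⟨hD, _⟩ | ⟨_, heq⟩
      · exact hs₁A2 h
      · exact hE₂cf ⟨∅, s₁, (mem_Sreduct_R_iff F F₁ F₂ S₃ E₁ s₁ s₂).mpr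
          (Or.inr (Or.inl ⟨hD, rfl⟩)), Set.empty_subset _, hmem⟩
      · exact hne heq
    -- if some set is support-incompatible but not closure-defeated, s₂ ∈ E₂
    have hs₂E₂ : ∀ T ∈ suppIncompatible F₁ S₃ E₁ \ F.closureDefeated F₁ S₃ E₁, s₂ ∈ E₂ := by
      intro T hT
      by_contra hn
      have hs₂GA : s₂ ∈ (F.Sreduct F₁ F₂ S₃ E₁ s₁ s₂).A :=
        (mem_Sreduct_A_iff F F₁ F₂ S₃ E₁ s₁ s₂).mpr
          (Or.inr (Or.inr ⟨Set.nonempty_iff_ne_empty.mp ⟨T, hT⟩, rfl⟩))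
      obtain ⟨T', hT'R, hT'E⟩ := hE₂att s₂ ⟨hs₂GA, hn⟩
      rcases (mem_Sreduct_R_iff F F₁ F₂ S₃ E₁ s₁ s₂).mp hT'R with h | ⟨_, heq⟩ | ⟨T'', _, heq⟩
      · exact hs₂A2 ((hW2.1 _ h).2)
      · exact hne ((pair_inj' heq).2).symm
      · have : s₂ ∈ T' := by
          rw [(pair_inj' heq).1]
          exact Or.inr rfl
        exact hn (hT'E this)
    -- key fact: no support-incompatible set has its A₂-part inside E₂
    have key : ∀ T ∈ suppIncompatible F₁ S₃ E₁, ¬ (T ∩ F₂.A ⊆ E₂) := by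
      intro T hT hsub
      by_cases hD : T ∈ F.closureDefeated F₁ S₃ E₁
      · have hmem : (T ∩ F₂.A, s₁) ∈ (F.Sreduct F₁ F₂ S₃ E₁ s₁ s₂).S :=
          (mem_Sreduct_S_iff F F₁ F₂ S₃ E₁ s₁ s₂).mpr (Or.inr (Or.inl ⟨T, hD, rfl⟩))
        exact hs₁E₂ (mem_of_closed_support hE₂cl hmem hsub)
      · have hTD : T ∈ suppIncompatible F₁ S₃ E₁ \ F.closureDefeated F₁ S₃ E₁ := ⟨hT, hD⟩
        have hatt : ((T ∩ F₂.A) ∪ {s₂}, s₂) ∈ (F.Sreduct F₁ F₂ S₃ E₁ s₁ s₂).R :=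
          (mem_Sreduct_R_iff F F₁ F₂ S₃ E₁ s₁ s₂).mpr (Or.inr (Or.inr ⟨T, hTD, rfl⟩))
        refine hE₂cf ⟨_, s₂, hatt, ?_, hs₂E₂ T hTD⟩
        rintro x (hx | hx)
        · exact hsub hx
        · rw [Set.mem_singleton_iff.mp hx]; exact hs₂E₂ T hTD
    have hE₂sub : E₂ \ {s₂} ⊆ F₂.A := by
      rintro a ⟨ha, hns⟩
      rcases (mem_Sreduct_A_iff F F₁ F₂ S₃ E₁ s₁ s₂).mp (hE₂A ha) with h | ⟨_, h⟩ | ⟨_, h⟩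
      · exact h
      · exact absurd (h ▸ ha) hs₁E₂
      · exact absurd h hns
    have hEA₁ : ∀ a ∈ E₁ ∪ (E₂ \ {s₂}), a ∈ F₁.A → a ∈ E₁ := by
      rintro a (h | h) haA
      · exact h
      · exact absurd (hE₂sub h) (fun c => hdj a haA c)
    have hEA₂ : ∀ a ∈ E₁ ∪ (E₂ \ {s₂}), a ∈ F₂.A → a ∈ E₂ \ {s₂} := by
      rintro a (h | h) haA
      · exact absurd haA (fun c => hdj a (hE₁A h) c)
      · exact h
    refine stable_iff'.mpr ⟨?_, ?_, ?_, ?_⟩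
    · rintro a (h | h)
      · rw [hA]; exact Or.inl (hE₁A h)
      · rw [hA]; exact Or.inr (hE₂sub h)
    · rintro ⟨T, h, hTR, hTE, hhE⟩
      rw [hR] at hTR
      rcases hTR with hTR | hTR
      · exact hE₁cf ⟨T, h, hTR, fun t ht => hEA₁ t (hTE ht) ((hW1.1 _ hTR).1 ht),
          hEA₁ h hhE ((hW1.1 _ hTR).2)⟩
      · refine hE₂cf ⟨T, h, (mem_Sreduct_R_iff F F₁ F₂ S₃ E₁ s₁ s₂).mpr (Or.inl hTR),
          fun t ht => (hEA₂ t (hTE ht) ((hW2.1 _ hTR).1 ht)).1,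
          (hEA₂ h hhE ((hW2.1 _ hTR).2)).1⟩
    · refine closed_iff'.2 ?_
      intro a ha
      induction ha with
      | base h => exact h
      | @step T h hSmem hall ih =>
        have hTE : ∀ t ∈ T, t ∈ E₁ ∪ (E₂ \ {s₂}) := ih
        rw [hS] at hSmem
        rcases hSmem with (hSmem | hSmem) | hSmem
        · exact Or.inl (mem_of_closed_support hE₁cl hSmem
            (fun t ht => hEA₁ t (hTE t ht) ((hW1.2 _ hSmem).1 ht)))
        · have hh2 : h ∈ E₂ := mem_of_closed_support hE₂cl
            ((mem_Sreduct_S_iff F F₁ F₂ S₃ E₁ s₁ s₂).mpr (Or.inl hSmem))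
            (fun t ht => (hEA₂ t (hTE t ht) ((hW2.2 _ hSmem).1 ht)).1)
          exact Or.inr ⟨hh2, fun c => hs₂A2 (Set.mem_singleton_iff.mp c ▸ (hW2.2 _ hSmem).2)⟩
        · have hhead : h ∈ F₁.A := (hS3 _ hSmem).2.2
          by_cases hh : h ∈ E₁
          · exact Or.inl hh
          · exfalso
            have hT𝒯 : T ∈ suppIncompatible F₁ S₃ E₁ :=
              ⟨h, hhead, hSmem, fun t ⟨ht, htA⟩ => hEA₁ t (hTE t ht) htA, hh⟩
            exact key T hT𝒯 (fun t ⟨ht, htA⟩ => (hEA₂ t (hTE t ht) htA).1)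
    · intro x hx
      obtain ⟨hxA, hxE⟩ := hx
      rw [hA] at hxA
      rcases hxA with hxA | hxA
      · obtain ⟨T, hTR, hTE⟩ := hE₁att x ⟨hxA, fun c => hxE (Or.inl c)⟩
        exact ⟨T, by rw [hR]; exact Or.inl hTR, fun t ht => Or.inl (hTE ht)⟩
      · have hxE₂ : x ∉ E₂ := by
          intro c
          exact hxE (Or.inr ⟨c, fun cs => hs₂A2 (Set.mem_singleton_iff.mp cs ▸ hxA)⟩)
        obtain ⟨T, hTR, hTE⟩ := hE₂att x
          ⟨(mem_Sreduct_A_iff F F₁ F₂ S₃ E₁ s₁ s₂).mpr (Or.inl hxA), hxE₂⟩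
        rcases (mem_Sreduct_R_iff F F₁ F₂ S₃ E₁ s₁ s₂).mp hTR with h | ⟨_, heq⟩ | ⟨T'', _, heq⟩
        · refine ⟨T, by rw [hR]; exact Or.inr h, fun t ht => ?_⟩
          exact Or.inr ⟨hTE ht, fun cs => hs₂A2 (Set.mem_singleton_iff.mp cs ▸ (hW2.1 _ h).1 ht)⟩
        · exact absurd ((pair_inj' heq).2 ▸ hxA) hs₁A2
        · exact absurd ((pair_inj' heq).2 ▸ hxA) hs₂A2
  · -- Direction 2
    intro E hE
    obtain ⟨hEA, hEcf, hEcl, hEatt⟩ := stable_iff'.mp hE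
    have key2 : ∀ T ∈ suppIncompatible F₁ S₃ (E ∩ F₁.A), ¬ (T ∩ F₂.A ⊆ E) := by
      rintro T ⟨h, hhA, hTS3, hTA1, hhE⟩ hsub
      have hTA : T ⊆ F.A := (hS3 _ hTS3).2.1
      have hTE : T ⊆ E := by
        intro t ht
        have := hTA ht
        rw [hA] at this
        rcases this with htA | htA
        · exact (hTA1 ⟨ht, htA⟩).1
        · exact hsub ⟨ht, htA⟩
      have hh : h ∈ E := mem_of_closed_support hEcl (by rw [hS]; exact Or.inr hTS3) hTE
      exact hhE ⟨hh, hhA⟩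
    have hatt2 : ∀ x ∈ F₂.A, x ∉ E → ∃ T, (T, x) ∈ F₂.R ∧ T ⊆ E ∩ F₂.A := by
      intro x hx hxE
      obtain ⟨T, hTR, hTE⟩ := hEatt x ⟨by rw [hA]; exact Or.inr hx, hxE⟩
      rw [hR] at hTR
      rcases hTR with h | h
      · exact absurd ((hW1.1 _ h).2) (fun c => hdj x c hx)
      · exact ⟨T, h, fun t ht => ⟨hTE ht, (hW2.1 _ h).1 ht⟩⟩
    constructor
    · -- E ∩ A₁ is stable in F₁
      refine stable_iff'.mpr ⟨Set.inter_subset_right, ?_, ?_, ?_⟩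
      · rintro ⟨T, h, hTR, hTE, hhE⟩
        exact hEcf ⟨T, h, by rw [hR]; exact Or.inl hTR,
          fun t ht => (hTE ht).1, hhE.1⟩
      · refine closed_iff'.2 ?_
        intro a ha
        induction ha with
        | base h => exact h
        | @step T h hSmem hall ih =>
          have hh : h ∈ E := mem_of_closed_support hEcl
            (by rw [hS]; exact Or.inl (Or.inl hSmem)) (fun t ht => (ih t ht).1)
          exact ⟨hh, (hW1.2 _ hSmem).2⟩
      · rintro x ⟨hxA, hxE⟩
        have hxE' : x ∉ E := fun c => hxE ⟨c, hxA⟩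
        obtain ⟨T, hTR, hTE⟩ := hEatt x ⟨by rw [hA]; exact Or.inl hxA, hxE'⟩
        rw [hR] at hTR
        rcases hTR with h | h
        · exact ⟨T, h, fun t ht => ⟨hTE ht, (hW1.1 _ h).1 ht⟩⟩
        · exact absurd ((hW2.1 _ h).2) (fun c => hdj x hxA c)
    · -- the A₂-part (possibly with s₂ added) is stable in the S-reduct
      by_cases hTD : suppIncompatible F₁ S₃ (E ∩ F₁.A) \ F.closureDefeated F₁ S₃ (E ∩ F₁.A) = ∅
      · left
        refine stable_iff'.mpr ⟨?_, ?_, ?_, ?_⟩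
        · intro a ha
          exact (mem_Sreduct_A_iff F F₁ F₂ S₃ (E ∩ F₁.A) s₁ s₂).mpr (Or.inl ha.2)
        · rintro ⟨T, h, hTR, hTE, hhE⟩
          rcases (mem_Sreduct_R_iff F F₁ F₂ S₃ (E ∩ F₁.A) s₁ s₂).mp hTR with
            h' | ⟨_, heq⟩ | ⟨T'', hT'', _⟩
          · exact hEcf ⟨T, h, by rw [hR]; exact Or.inr h', fun t ht => (hTE ht).1, hhE.1⟩
          · exact hs₁A2 ((pair_inj' heq).2 ▸ hhE.2)
          · rw [hTD] at hT''; exact hT''.elim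
        · refine closed_iff'.2 ?_
          intro a ha
          induction ha with
          | base h => exact h
          | @step T h hSmem hall ih =>
            rcases (mem_Sreduct_S_iff F F₁ F₂ S₃ (E ∩ F₁.A) s₁ s₂).mp hSmem with
              h' | ⟨T'', hT'', heq⟩ | ⟨T'', hT'', _⟩
            · have hh : h ∈ E := mem_of_closed_support hEcl
                (by rw [hS]; exact Or.inl (Or.inr h')) (fun t ht => (ih t ht).1)
              exact ⟨hh, (hW2.2 _ h').2⟩
            · exfalso
              have hTeq : T = T'' ∩ F₂.A := (pair_inj' heq).1
              refine key2 T'' hT''.1 ?_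
              intro t ht
              exact (ih t (hTeq ▸ ht)).1
            · rw [hTD] at hT''; exact hT''.elim
        · rintro x ⟨hxGA, hxE⟩
          rcases (mem_Sreduct_A_iff F F₁ F₂ S₃ (E ∩ F₁.A) s₁ s₂).mp hxGA with
            hx | ⟨hD, heq⟩ | ⟨hT'', _⟩
          · have hxE' : x ∉ E := fun c => hxE ⟨c, hx⟩
            obtain ⟨T, hTR, hTE⟩ := hatt2 x hx hxE'
            exact ⟨T, (mem_Sreduct_R_iff F F₁ F₂ S₃ (E ∩ F₁.A) s₁ s₂).mpr (Or.inl hTR), hTE⟩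
          · exact ⟨∅, (mem_Sreduct_R_iff F F₁ F₂ S₃ (E ∩ F₁.A) s₁ s₂).mpr
              (Or.inr (Or.inl ⟨hD, by rw [heq]⟩)), Set.empty_subset _⟩
          · exact absurd hTD hT''
      · right
        have hmem2 : ∀ a ∈ (E ∩ F₂.A) ∪ {s₂}, a ∈ F₂.A → a ∈ E ∩ F₂.A := by
          rintro a (h | h) haA
          · exact h
          · exact absurd (Set.mem_singleton_iff.mp h ▸ haA) hs₂A2
        refine stable_iff'.mpr ⟨?_, ?_, ?_, ?_⟩
        · rintro a (h | h)
          · exact (mem_Sreduct_A_iff F F₁ F₂ S₃ (E ∩ F₁.A) s₁ s₂).mpr (Or.inl h.2)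
          · exact (mem_Sreduct_A_iff F F₁ F₂ S₃ (E ∩ F₁.A) s₁ s₂).mpr
              (Or.inr (Or.inr ⟨hTD, Set.mem_singleton_iff.mp h⟩))
        · rintro ⟨T, h, hTR, hTE, hhE⟩
          rcases (mem_Sreduct_R_iff F F₁ F₂ S₃ (E ∩ F₁.A) s₁ s₂).mp hTR with
            h' | ⟨_, heq⟩ | ⟨T'', hT'', heq⟩
          · refine hEcf ⟨T, h, by rw [hR]; exact Or.inr h',
              fun t ht => (hmem2 t (hTE ht) ((hW2.1 _ h').1 ht)).1,
              (hmem2 h hhE ((hW2.1 _ h').2)).1⟩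
          · have hh : h = s₁ := (pair_inj' heq).2
            rcases hh ▸ hhE with hc | hc
            · exact hs₁A2 hc.2
            · exact hne (Set.mem_singleton_iff.mp hc)
          · have hTeq : T = (T'' ∩ F₂.A) ∪ {s₂} := (pair_inj' heq).1
            refine key2 T'' hT''.1 ?_
            intro t ht
            exact (hmem2 t (hTE (hTeq ▸ Set.mem_union_left _ ht)) ht.2).1
        · refine closed_iff'.2 ?_
          intro a ha
          induction ha with
          | base h => exact h
          | @step T h hSmem hall ih =>
            rcases (mem_Sreduct_S_iff F F₁ F₂ S₃ (E ∩ F₁.A) s₁ s₂).mp hSmem with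
              h' | ⟨T'', hT'', heq⟩ | ⟨T'', hT'', heq⟩
            · have hh : h ∈ E := mem_of_closed_support hEcl
                (by rw [hS]; exact Or.inl (Or.inr h'))
                (fun t ht => (hmem2 t (ih t ht) ((hW2.2 _ h').1 ht)).1)
              exact Or.inl ⟨hh, (hW2.2 _ h').2⟩
            · exfalso
              have hTeq : T = T'' ∩ F₂.A := (pair_inj' heq).1
              refine key2 T'' hT''.1 ?_
              intro t ht
              exact (hmem2 t (ih t (hTeq ▸ ht)) ht.2).1
            · exact Or.inr ((pair_inj' heq).2 ▸ rfl)
        · rintro x ⟨hxGA, hxE⟩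
          rcases (mem_Sreduct_A_iff F F₁ F₂ S₃ (E ∩ F₁.A) s₁ s₂).mp hxGA with
            hx | ⟨hD, heq⟩ | ⟨_, heq⟩
          · have hxE' : x ∉ E := fun c => hxE (Or.inl ⟨c, hx⟩)
            obtain ⟨T, hTR, hTE⟩ := hatt2 x hx hxE'
            exact ⟨T, (mem_Sreduct_R_iff F F₁ F₂ S₃ (E ∩ F₁.A) s₁ s₂).mpr (Or.inl hTR),
              fun t ht => Or.inl (hTE ht)⟩
          · exact ⟨∅, (mem_Sreduct_R_iff F F₁ F₂ S₃ (E ∩ F₁.A) s₁ s₂).mpr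
              (Or.inr (Or.inl ⟨hD, by rw [heq]⟩)), Set.empty_subset _⟩
          · exact absurd (Or.inr (Set.mem_singleton_iff.mpr heq)) hxE
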